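/- Let U be a universe of separations and S ⊆ U a structurally submodular separation system. Then there is a nested set N ⊆ S such that any two distinct regular profiles of S are distinguished by some separation in N. -/
import Mathlib


namespace SepDemo

/-- A universe of separations: a finite lattice with an order-reversing involution. -/
structure SepUniverse (U : Type*) [Lattice U] [Fintype U] where
  inv : U → U
  inv_inv : ∀ s, inv (inv s) = s
  le_iff : ∀ r s : U, r ≤ s ↔ inv s ≤ inv r

/-- A submodular universe: a universe with a submodular order function. -/
structure SubmodUniverse (U : Type*) [Lattice U] [Fintype U] extends SepUniverse U where
  ord : U → ℕ
  ord_inv : ∀ s, ord (inv s) = ord s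
  submod : ∀ s t : U, ord (s ⊔ t) + ord (s ⊓ t) ≤ ord s + ord t

variable {U : Type*} [Lattice U] [Fintype U]

/-- A separation system inside a universe: a subset closed under the involution. -/
def SepSystem (𝒰 : SepUniverse U) (S : Set U) : Prop :=
  ∀ s ∈ S, 𝒰.inv s ∈ S

/-- An orientation of `S`: contains, for each `s ∈ S`, exactly one of `s`, `s*`
(just `s` itself if `s` is degenerate). -/
def IsOrientation (𝒰 : SepUniverse U) (S O : Set U) : Prop :=
  O ⊆ S ∧ ∀ s ∈ S, (s ∈ O ∨ 𝒰.inv s ∈ O) ∧ (s ∈ O → 𝒰.inv s ∈ O → s = 𝒰.inv s)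

/-- Consistency: no `r, s ∈ O` with `{r,r*} ≠ {s,s*}` and `r* ≤ s`. -/
def Consistent (𝒰 : SepUniverse U) (O : Set U) : Prop :=
  ∀ r ∈ O, ∀ s ∈ O, ({r, 𝒰.inv r} : Set U) ≠ ({s, 𝒰.inv s} : Set U) → ¬ 𝒰.inv r ≤ s

/-- A profile of `S`: a consistent orientation satisfying the profile property. -/
def IsProfile (𝒰 : SepUniverse U) (S P : Set U) : Prop :=
  IsOrientation 𝒰 S P ∧ Consistent 𝒰 P ∧ ∀ r ∈ P, ∀ s ∈ P, 𝒰.inv (r ⊔ s) ∉ P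

/-- Regular: contains no cosmall separation. -/
def Regular (𝒰 : SepUniverse U) (P : Set U) : Prop :=
  ∀ s ∈ P, ¬ 𝒰.inv s ≤ s

/-- Two separations are nested. -/
def Nested (𝒰 : SepUniverse U) (r s : U) : Prop :=
  r ≤ s ∨ r ≤ 𝒰.inv s ∨ 𝒰.inv r ≤ s ∨ 𝒰.inv r ≤ 𝒰.inv s

/-- A set of separations is nested if its members are pairwise nested. -/
def NestedSet (𝒰 : SepUniverse U) (N : Set U) : Prop :=
  ∀ r ∈ N, ∀ s ∈ N, Nested 𝒰 r s

/-- `s` distinguishes the orientations `O₁` and `O₂`. -/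
def Distinguishes (𝒰 : SepUniverse U) (s : U) (O₁ O₂ : Set U) : Prop :=
  (s ∈ O₁ ∧ 𝒰.inv s ∈ O₂) ∨ (𝒰.inv s ∈ O₁ ∧ s ∈ O₂)

/-- Two orientations are distinguishable. -/
def Distinguishable (𝒰 : SepUniverse U) (P Q : Set U) : Prop :=
  ∃ s : U, Distinguishes 𝒰 s P Q

/-- Structural submodularity of a separation system. -/
def StructSubmodular (S : Set U) : Prop :=
  ∀ s ∈ S, ∀ t ∈ S, s ⊔ t ∈ S ∨ s ⊓ t ∈ S

/-- `s` is trivial in `S`. -/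
def IsTrivialIn (𝒰 : SepUniverse U) (S : Set U) (s : U) : Prop :=
  ∃ r ∈ S, ({r, 𝒰.inv r} : Set U) ≠ ({s, 𝒰.inv s} : Set U) ∧ s ≤ r ∧ s ≤ 𝒰.inv r

/-- A star of separations. -/
def IsStar (𝒰 : SepUniverse U) (σ : Set U) : Prop :=
  ∀ r ∈ σ, ∀ s ∈ σ, r ≠ s → r ≤ 𝒰.inv s

/-- The shift `σ_x^{s₀}` of a star `σ` at `x ∈ σ` to `s₀`. -/
def shiftStar (𝒰 : SepUniverse U) (σ : Set U) (x s₀ : U) : Set U :=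
  insert (x ⊔ s₀) ((fun y => y ⊓ 𝒰.inv s₀) '' (σ \ {x}))

/-- `s₀` emulates `r` in `S`. -/
def Emulates (𝒰 : SepUniverse U) (S : Set U) (s₀ r : U) : Prop :=
  r ≤ s₀ ∧ ∀ t ∈ S, t ≠ 𝒰.inv r → r ≤ t → t ⊔ s₀ ∈ S

/-- `s₀` emulates `r` in `S` for a set `F` of stars. -/
def EmulatesFor (𝒰 : SepUniverse U) (S : Set U) (F : Set (Set U)) (s₀ r : U) : Prop :=
  Emulates 𝒰 S s₀ r ∧
    ∀ σ ∈ F, 𝒰.inv r ∉ σ → ∀ x ∈ σ, r ≤ x → shiftStar 𝒰 σ x s₀ ∈ F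

/-- `F` forces `s`. -/
def Forces (𝒰 : SepUniverse U) (F : Set (Set U)) (s : U) : Prop :=
  ({𝒰.inv s} : Set U) ∈ F

/-- `S` is `F`-separable. -/
def FSeparable (𝒰 : SepUniverse U) (S : Set U) (F : Set (Set U)) : Prop :=
  ∀ r₁ ∈ S, ∀ r₂ ∈ S,
    ¬ IsTrivialIn 𝒰 S r₁ → ¬ IsTrivialIn 𝒰 S r₂ →
    r₁ ≠ 𝒰.inv r₁ → r₂ ≠ 𝒰.inv r₂ →
    ¬ Forces 𝒰 F r₁ → ¬ Forces 𝒰 F r₂ →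
    r₁ ≤ 𝒰.inv r₂ →
    ∃ s₀ ∈ S, r₁ ≤ s₀ ∧ s₀ ≤ 𝒰.inv r₂ ∧
      EmulatesFor 𝒰 S F s₀ r₁ ∧ EmulatesFor 𝒰 S F (𝒰.inv s₀) r₂

/-- `r` is `F`-critical. -/
def FCritical (𝒰 : SepUniverse U) (F : Set (Set U)) (r : U) : Prop :=
  (∃ σ ∈ F, r ∈ σ) ∧
    ¬ ∃ σ' ∈ F, σ' ∩ ({r, 𝒰.inv r} : Set U) = ({𝒰.inv r} : Set U)

/-- `S` is critically `F`-separable. -/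
def CritFSeparable (𝒰 : SepUniverse U) (S : Set U) (F : Set (Set U)) : Prop :=
  ∀ r₁ ∈ S, ∀ r₂ ∈ S, FCritical 𝒰 F r₁ → FCritical 𝒰 F r₂ → r₁ ≤ 𝒰.inv r₂ →
    ∃ s₀ ∈ S, EmulatesFor 𝒰 S F s₀ r₁ ∧ EmulatesFor 𝒰 S F (𝒰.inv s₀) r₂

/-- An `F`-tangle of `S`: a consistent orientation including no member of `F`. -/
def FTangle (𝒰 : SepUniverse U) (S : Set U) (F : Set (Set U)) (O : Set U) : Prop :=
  IsOrientation 𝒰 S O ∧ Consistent 𝒰 O ∧ ∀ σ ∈ F, ¬ σ ⊆ O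

/-- `F` is standard for `S`: it forces all trivial separations of `S`. -/
def StandardFor (𝒰 : SepUniverse U) (S : Set U) (F : Set (Set U)) : Prop :=
  ∀ r ∈ S, IsTrivialIn 𝒰 S r → ({𝒰.inv r} : Set U) ∈ F

/-- An `S`-tree: a finite tree together with edge labels in `S` commuting with
the involution. -/
structure STree (𝒰 : SepUniverse U) (S : Set U) where
  V : Type
  fintypeV : Fintype V
  G : SimpleGraph V
  isTree : G.IsTree
  label : V → V → U
  label_mem : ∀ x y, G.Adj x y → label x y ∈ S
  label_inv : ∀ x y, G.Adj x y → label y x = 𝒰.inv (label x y)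

namespace STree

variable {𝒰 : SepUniverse U} {S : Set U}

/-- The star `α(t)` associated with a node `t`. -/
def nodeStar (T : STree 𝒰 S) (t : T.V) : Set U :=
  {u | ∃ s, T.G.Adj s t ∧ T.label s t = u}

/-- The `S`-tree is over `F`. -/
def Over (T : STree 𝒰 S) (F : Set (Set U)) : Prop :=
  ∀ t : T.V, T.nodeStar t ∈ F

/-- Irredundance of an `S`-tree. -/
def Irredundant (T : STree 𝒰 S) : Prop :=
  ∀ t t' t'' : T.V, T.G.Adj t' t → T.G.Adj t'' t → t' ≠ t'' →
    T.label t' t ≠ T.label t'' t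

/-- The set of edge labels of the tree. -/
def labels (T : STree 𝒰 S) : Set U :=
  {u | ∃ x y, T.G.Adj x y ∧ T.label x y = u}

/-- `t` is a sink of the orientation of the tree induced by `P`. -/
def IsSinkOf (T : STree 𝒰 S) (P : Set U) (t : T.V) : Prop :=
  ∀ s, T.G.Adj s t → T.label s t ∈ P

/-- The degree of a node. -/
noncomputable def deg (T : STree 𝒰 S) (t : T.V) : ℕ :=
  (T.G.neighborSet t).ncard

/-- The maximum degree of the tree. -/
noncomputable def maxDeg (T : STree 𝒰 S) : ℕ :=
  sSup {n | ∃ t : T.V, T.deg t = n}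

end STree

/-- A tree of tangles for `S`: an irredundant `S`-tree whose edge labels
distinguish every two distinct regular profiles of `S`. -/
def TreeOfTangles (𝒰 : SepUniverse U) (S : Set U) (T : STree 𝒰 S) : Prop :=
  T.Irredundant ∧
    ∀ P Q : Set U, IsProfile 𝒰 S P → Regular 𝒰 P → IsProfile 𝒰 S Q → Regular 𝒰 Q →
      P ≠ Q → ∃ s ∈ T.labels, Distinguishes 𝒰 s P Q

/-- `δ(P)`: the minimum size of a subset of `P` distinguishing `P` from every
other regular profile of `S`. -/
noncomputable def deltaP (𝒰 : SepUniverse U) (S P : Set U) : ℕ :=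
  sInf {n | ∃ D : Set U, D ⊆ P ∧ D.ncard = n ∧
    ∀ Q : Set U, IsProfile 𝒰 S Q → Regular 𝒰 Q → Q ≠ P →
      ∃ s ∈ D, Distinguishes 𝒰 s P Q}

/-- `S_k`: the separations of order less than `k`. -/
def Sk (𝒱 : SubmodUniverse U) (k : ℕ) : Set U := {s | 𝒱.ord s < k}

/-- `s` distinguishes `P` and `Q` efficiently. -/
def EffDistinguishes (𝒱 : SubmodUniverse U) (s : U) (P Q : Set U) : Prop :=
  Distinguishes 𝒱.toSepUniverse s P Q ∧
    ∀ t : U, Distinguishes 𝒱.toSepUniverse t P Q → 𝒱.ord s ≤ 𝒱.ord t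

/-- Property `Eff(P)` of a star `σ`. -/
def EffProp (𝒱 : SubmodUniverse U) (σ P : Set U) : Prop :=
  ¬ ∃ s ∈ σ, ∃ s' ∈ P, s ≤ s' ∧ 𝒱.ord s' < 𝒱.ord s

/-- `s` is a splice for `r`. -/
def SpliceFor (𝒱 : SubmodUniverse U) (s r : U) : Prop :=
  r ≤ s ∧ ¬ ∃ t : U, r ≤ t ∧ t ≤ s ∧ 𝒱.ord t < 𝒱.ord s

/-- `s` is a splice between `r₁` and `r₂`. -/
def SpliceBetween (𝒱 : SubmodUniverse U) (s r₁ r₂ : U) : Prop :=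
  r₁ ≤ s ∧ s ≤ r₂ ∧ ∀ t : U, r₁ ≤ t → t ≤ r₂ → 𝒱.ord s ≤ 𝒱.ord t

/-- The set `F_e` of stars in `S_k` included in at most one profile of `𝔓` and
satisfying `Eff(P)` whenever included in `P ∈ 𝔓`. -/
def Fe (𝒱 : SubmodUniverse U) (k : ℕ) (𝔓 : Set (Set U)) : Set (Set U) :=
  {σ | σ ⊆ Sk 𝒱 k ∧ IsStar 𝒱.toSepUniverse σ ∧
    (∀ P ∈ 𝔓, ∀ Q ∈ 𝔓, σ ⊆ P → σ ⊆ Q → P = Q) ∧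
    (∀ P ∈ 𝔓, σ ⊆ P → EffProp 𝒱 σ P)}

/-- `δ_e(P)`: the minimum size of a star `σ ⊆ P` with `Eff(P)` such that every
other regular profile of `S_k` contains the inverse of some element of `σ`. -/
noncomputable def deltaE (𝒱 : SubmodUniverse U) (k : ℕ) (P : Set U) : ℕ :=
  sInf {n | ∃ σ : Set U, σ ⊆ P ∧ IsStar 𝒱.toSepUniverse σ ∧ EffProp 𝒱 σ P ∧
    σ.ncard = n ∧
    ∀ Q : Set U, IsProfile 𝒱.toSepUniverse (Sk 𝒱 k) Q → Regular 𝒱.toSepUniverse Q →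
      Q ≠ P → ∃ s ∈ σ, 𝒱.inv s ∈ Q}

/-- `δ_{e,max}`: maximum of `δ_e` over all regular profiles of `S_k`. -/
noncomputable def deltaEMax (𝒱 : SubmodUniverse U) (k : ℕ) : ℕ :=
  sSup {n | ∃ P : Set U, IsProfile 𝒱.toSepUniverse (Sk 𝒱 k) P ∧
    Regular 𝒱.toSepUniverse P ∧ deltaE 𝒱 k P = n}

/-- `P` is a profile in `U`: a `k`-profile for some `k`. -/
def ProfileIn (𝒱 : SubmodUniverse U) (P : Set U) : Prop :=
  ∃ k : ℕ, IsProfile 𝒱.toSepUniverse (Sk 𝒱 k) P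

/-- Strong robustness of a profile. -/
def StronglyRobust (𝒱 : SubmodUniverse U) (P : Set U) : Prop :=
  ∀ s ∈ P, ∀ r : U, 𝒱.ord (s ⊔ r) ≤ 𝒱.ord s → 𝒱.ord (s ⊔ 𝒱.inv r) ≤ 𝒱.ord s →
    (s ⊔ r ∈ P ∨ s ⊔ 𝒱.inv r ∈ P)

/-- `O` weakly orients a separation as `s'` if `s' ≤ r` for some `r ∈ O`. -/
def WeaklyOrientsAs (O : Set U) (s' : U) : Prop :=
  ∃ r ∈ O, s' ≤ r

/-- `O` weakly orients `s` (as `s` or as `s*`). -/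
def WeaklyOrients (𝒰 : SepUniverse U) (O : Set U) (s : U) : Prop :=
  WeaklyOrientsAs O s ∨ WeaklyOrientsAs O (𝒰.inv s)

/-- The set `F_d` of stars, relative to the set of profiles `𝔓`. -/
def Fd (𝒱 : SubmodUniverse U) (𝔓 : Set (Set U)) : Set (Set U) :=
  {σ | IsStar 𝒱.toSepUniverse σ ∧
    (∀ P ∈ 𝔓, ∀ Q ∈ 𝔓, σ ⊆ P → σ ⊆ Q → P = Q) ∧
    (∀ P ∈ 𝔓, ¬ σ ⊆ P → ∃ s ∈ σ, WeaklyOrientsAs P (𝒱.inv s)) ∧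
    (∀ P ∈ 𝔓, σ ⊆ P → EffProp 𝒱 σ P)}

section TreeOfTanglesAux

/-! ### Auxiliary lemmas for Statement 0 -/

lemma inv_le_inv' (𝒰 : SepUniverse U) {a b : U} (h : a ≤ b) :
    𝒰.inv b ≤ 𝒰.inv a := (𝒰.le_iff a b).mp h

lemma le_of_inv_le' (𝒰 : SepUniverse U) {a b : U} (h : 𝒰.inv b ≤ 𝒰.inv a) :
    a ≤ b := (𝒰.le_iff a b).mpr h

lemma inv_sup (𝒰 : SepUniverse U) (a b : U) :
    𝒰.inv (a ⊔ b) = 𝒰.inv a ⊓ 𝒰.inv b := by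
  apply le_antisymm
  · exact le_inf (inv_le_inv' 𝒰 le_sup_left) (inv_le_inv' 𝒰 le_sup_right)
  · have h : a ⊔ b ≤ 𝒰.inv (𝒰.inv a ⊓ 𝒰.inv b) := by
      apply sup_le
      · have := inv_le_inv' 𝒰 (inf_le_left (a := 𝒰.inv a) (b := 𝒰.inv b))
        rwa [𝒰.inv_inv] at this
      · have := inv_le_inv' 𝒰 (inf_le_right (a := 𝒰.inv a) (b := 𝒰.inv b))
        rwa [𝒰.inv_inv] at this
    have := inv_le_inv' 𝒰 h
    rwa [𝒰.inv_inv] at this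

lemma inv_inf (𝒰 : SepUniverse U) (a b : U) :
    𝒰.inv (a ⊓ b) = 𝒰.inv a ⊔ 𝒰.inv b := by
  have h := inv_sup 𝒰 (𝒰.inv a) (𝒰.inv b)
  rw [𝒰.inv_inv, 𝒰.inv_inv] at h
  calc 𝒰.inv (a ⊓ b) = 𝒰.inv (𝒰.inv (𝒰.inv a ⊔ 𝒰.inv b)) := by rw [h]
    _ = 𝒰.inv a ⊔ 𝒰.inv b := 𝒰.inv_inv _

lemma nested_refl (𝒰 : SepUniverse U) (r : U) : Nested 𝒰 r r := Or.inl le_rfl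

lemma nested_symm {𝒰 : SepUniverse U} {r s : U} (h : Nested 𝒰 r s) :
    Nested 𝒰 s r := by
  rcases h with h | h | h | h
  · exact Or.inr (Or.inr (Or.inr (inv_le_inv' 𝒰 h)))
  · have h2 := inv_le_inv' 𝒰 h
    rw [𝒰.inv_inv] at h2
    exact Or.inr (Or.inl h2)
  · have h2 := inv_le_inv' 𝒰 h
    rw [𝒰.inv_inv] at h2
    exact Or.inr (Or.inr (Or.inl h2))
  · exact Or.inl (le_of_inv_le' 𝒰 h)

lemma nested_inv_iff_right (𝒰 : SepUniverse U) (r s : U) :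
    Nested 𝒰 r (𝒰.inv s) ↔ Nested 𝒰 r s := by
  unfold Nested
  rw [𝒰.inv_inv]
  tauto

lemma nested_inv_iff_left (𝒰 : SepUniverse U) (r s : U) :
    Nested 𝒰 (𝒰.inv r) s ↔ Nested 𝒰 r s := by
  unfold Nested
  rw [𝒰.inv_inv]
  tauto

/-- The (oriented) corners of a pair of separations. -/
def IsCorner (𝒰 : SepUniverse U) (r s c : U) : Prop :=
  c = r ⊔ s ∨ c = r ⊓ s ∨ c = r ⊔ 𝒰.inv s ∨ c = r ⊓ 𝒰.inv s

lemma isCorner_inv_right {𝒰 : SepUniverse U} {r s c : U}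
    (h : IsCorner 𝒰 r (𝒰.inv s) c) : IsCorner 𝒰 r s c := by
  rw [IsCorner, 𝒰.inv_inv] at h
  rcases h with h | h | h | h
  · exact Or.inr (Or.inr (Or.inl h))
  · exact Or.inr (Or.inr (Or.inr h))
  · exact Or.inl h
  · exact Or.inr (Or.inl h)

lemma corner_nested_fst {𝒰 : SepUniverse U} {r s c : U} (h : IsCorner 𝒰 r s c) :
    Nested 𝒰 c r := by
  rcases h with rfl | rfl | rfl | rfl
  · exact nested_symm (Or.inl le_sup_left)
  · exact Or.inl inf_le_left
  · exact nested_symm (Or.inl le_sup_left)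
  · exact Or.inl inf_le_left

lemma corner_nested_snd {𝒰 : SepUniverse U} {r s c : U} (h : IsCorner 𝒰 r s c) :
    Nested 𝒰 c s := by
  rcases h with rfl | rfl | rfl | rfl
  · exact nested_symm (Or.inl le_sup_right)
  · exact Or.inl inf_le_right
  · refine Or.inr (Or.inr (Or.inl ?_))
    have := inv_le_inv' 𝒰 (le_sup_right : 𝒰.inv s ≤ r ⊔ 𝒰.inv s)
    rwa [𝒰.inv_inv] at this
  · exact Or.inr (Or.inl inf_le_right)

lemma fish_sup {𝒰 : SepUniverse U} {r s t : U} (hcross : ¬ Nested 𝒰 r s)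
    (htr : Nested 𝒰 t r) (hts : Nested 𝒰 t s) : Nested 𝒰 t (r ⊔ s) := by
  rcases htr with h1 | h1 | h1 | h1
  · exact Or.inl (h1.trans le_sup_left)
  · rcases hts with h2 | h2 | h2 | h2
    · exact Or.inl (h2.trans le_sup_right)
    · refine Or.inr (Or.inl ?_)
      rw [inv_sup]
      exact le_inf h1 h2
    · exact Or.inr (Or.inr (Or.inl (h2.trans le_sup_right)))
    · exfalso
      apply hcross
      have hst : s ≤ t := le_of_inv_le' 𝒰 h2
      have h3 := inv_le_inv' 𝒰 (hst.trans h1)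
      rw [𝒰.inv_inv] at h3
      exact Or.inr (Or.inl h3)
  · exact Or.inr (Or.inr (Or.inl (h1.trans le_sup_left)))
  · rcases hts with h2 | h2 | h2 | h2
    · exact Or.inl (h2.trans le_sup_right)
    · exfalso
      apply hcross
      have hrt : r ≤ t := le_of_inv_le' 𝒰 h1
      exact Or.inr (Or.inl (hrt.trans h2))
    · exact Or.inr (Or.inr (Or.inl (h2.trans le_sup_right)))
    · refine Or.inr (Or.inr (Or.inr ?_))
      rw [inv_sup]
      exact le_inf h1 h2

lemma fish {𝒰 : SepUniverse U} {r s c t : U} (hcross : ¬ Nested 𝒰 r s)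
    (htr : Nested 𝒰 t r) (hts : Nested 𝒰 t s) (hc : IsCorner 𝒰 r s c) :
    Nested 𝒰 t c := by
  rcases hc with rfl | rfl | rfl | rfl
  · exact fish_sup hcross htr hts
  · have hcross' : ¬ Nested 𝒰 (𝒰.inv r) (𝒰.inv s) := by
      rw [nested_inv_iff_left, nested_inv_iff_right]
      exact hcross
    have h1 : Nested 𝒰 t (𝒰.inv r ⊔ 𝒰.inv s) :=
      fish_sup hcross' ((nested_inv_iff_right 𝒰 t r).mpr htr)
        ((nested_inv_iff_right 𝒰 t s).mpr hts)
    have h2 : Nested 𝒰 t (𝒰.inv (r ⊓ s)) := by rw [inv_inf]; exact h1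
    rwa [nested_inv_iff_right] at h2
  · exact fish_sup (fun h => hcross ((nested_inv_iff_right 𝒰 r s).mp h)) htr
      ((nested_inv_iff_right 𝒰 t s).mpr hts)
  · have hcross' : ¬ Nested 𝒰 (𝒰.inv r) s := by
      rw [nested_inv_iff_left]
      exact hcross
    have h1 : Nested 𝒰 t (𝒰.inv r ⊔ s) :=
      fish_sup hcross' ((nested_inv_iff_right 𝒰 t r).mpr htr) hts
    have h2 : Nested 𝒰 t (𝒰.inv (r ⊓ 𝒰.inv s)) := by
      rw [inv_inf, 𝒰.inv_inv]
      exact h1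
    rwa [nested_inv_iff_right] at h2

lemma dist_symm {𝒰 : SepUniverse U} {c : U} {P Q : Set U}
    (h : Distinguishes 𝒰 c P Q) : Distinguishes 𝒰 c Q P := by
  rcases h with ⟨h1, h2⟩ | ⟨h1, h2⟩
  · exact Or.inr ⟨h2, h1⟩
  · exact Or.inl ⟨h2, h1⟩

lemma profile_orient {𝒰 : SepUniverse U} {S P : Set U} (hP : IsProfile 𝒰 S P)
    {x : U} (hx : x ∈ S) : x ∈ P ∨ 𝒰.inv x ∈ P := (hP.1.2 x hx).1

lemma profile_sup_mem {𝒰 : SepUniverse U} {S P : Set U} (hP : IsProfile 𝒰 S P)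
    {a b : U} (ha : a ∈ P) (hb : b ∈ P) (hab : a ⊔ b ∈ S) : a ⊔ b ∈ P :=
  ((hP.1.2 _ hab).1).resolve_right (hP.2.2 a ha b hb)

lemma profile_mem_of_le {𝒰 : SepUniverse U} {S P : Set U} (hP : IsProfile 𝒰 S P)
    (hreg : Regular 𝒰 P) {a c : U} (ha : a ∈ P) (hc : c ∈ S) (hle : c ≤ a) :
    c ∈ P := by
  rcases profile_orient hP hc with h | h
  · exact h
  by_cases hca : c = a
  · exact hca ▸ ha
  by_cases heq : ({𝒰.inv c, 𝒰.inv (𝒰.inv c)} : Set U) = ({a, 𝒰.inv a} : Set U)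
  · have hcmem : c ∈ ({a, 𝒰.inv a} : Set U) := by
      rw [← heq, 𝒰.inv_inv]
      exact Set.mem_insert_iff.mpr (Or.inr rfl)
    have hc2 : c = a ∨ c = 𝒰.inv a := by simpa using hcmem
    rcases hc2 with h' | h'
    · exact absurd h' hca
    · exact absurd (h' ▸ hle) (hreg a ha)
  · exfalso
    have hcons := hP.2.1 (𝒰.inv c) h a ha heq
    rw [𝒰.inv_inv] at hcons
    exact hcons hle

lemma exists_distinguisher {𝒰 : SepUniverse U} {S P Q : Set U}
    (hP : IsProfile 𝒰 S P) (hQ : IsProfile 𝒰 S Q) (hne : P ≠ Q) :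
    ∃ x, x ∈ S ∧ Distinguishes 𝒰 x P Q := by
  have hex : ∃ x, (x ∈ P ∧ x ∉ Q) ∨ (x ∈ Q ∧ x ∉ P) := by
    by_contra h
    push_neg at h
    apply hne
    ext x
    have hx := h x
    exact ⟨fun hxe => hx.1 hxe, fun hxe => hx.2 hxe⟩
  obtain ⟨x, hx | hx⟩ := hex
  · have hxS : x ∈ S := hP.1.1 hx.1
    rcases profile_orient hQ hxS with h | h
    · exact absurd h hx.2
    · exact ⟨x, hxS, Or.inl ⟨hx.1, h⟩⟩
  · have hxS : x ∈ S := hQ.1.1 hx.1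
    rcases profile_orient hP hxS with h | h
    · exact absurd h hx.2
    · exact ⟨x, hxS, Or.inr ⟨h, hx.1⟩⟩

lemma corner_main {𝒰 : SepUniverse U} {S P₁ Q₁ P₂ Q₂ : Set U}
    (hS : SepSystem 𝒰 S) (hsub : StructSubmodular S)
    (hP₁ : IsProfile 𝒰 S P₁) (hregP₁ : Regular 𝒰 P₁)
    (hQ₁ : IsProfile 𝒰 S Q₁) (hregQ₁ : Regular 𝒰 Q₁)
    (hP₂ : IsProfile 𝒰 S P₂) (hregP₂ : Regular 𝒰 P₂)
    (hQ₂ : IsProfile 𝒰 S Q₂) (hregQ₂ : Regular 𝒰 Q₂)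
    {r s : U} (hr : r ∈ S) (hs : s ∈ S)
    (hr1 : r ∈ P₁) (hr1' : 𝒰.inv r ∈ Q₁)
    (hs2 : s ∈ P₂) (hs2' : 𝒰.inv s ∈ Q₂)
    (hs1 : s ∈ P₁) :
    ∃ c, IsCorner 𝒰 r s c ∧ c ∈ S ∧
      (Distinguishes 𝒰 c P₁ Q₁ ∨ Distinguishes 𝒰 c P₂ Q₂) := by
  rcases hsub r hr s hs with hJ | hM
  · refine ⟨r ⊔ s, Or.inl rfl, hJ, Or.inl (Or.inl ⟨?_, ?_⟩)⟩
    · exact profile_sup_mem hP₁ hr1 hs1 hJ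
    · exact profile_mem_of_le hQ₁ hregQ₁ hr1' (hS _ hJ) (inv_le_inv' 𝒰 le_sup_left)
  · rcases profile_orient hQ₂ hr with hrQ₂ | hrQ₂
    · -- r ∈ Q₂
      rcases profile_orient hQ₁ hs with hsQ₁ | hsQ₁
      · -- s ∈ Q₁ : use submodularity on r and s*
        rcases hsub r hr (𝒰.inv s) (hS s hs) with hJ' | hM'
        · -- r ⊔ s* ∈ S distinguishes the second pair
          refine ⟨r ⊔ 𝒰.inv s, Or.inr (Or.inr (Or.inl rfl)), hJ',
            Or.inr (Or.inr ⟨?_, ?_⟩)⟩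
          · apply profile_mem_of_le hP₂ hregP₂ hs2 (hS _ hJ')
            have := inv_le_inv' 𝒰 (le_sup_right : 𝒰.inv s ≤ r ⊔ 𝒰.inv s)
            rwa [𝒰.inv_inv] at this
          · exact profile_sup_mem hQ₂ hrQ₂ hs2' hJ'
        · -- r ⊓ s* ∈ S distinguishes the first pair
          refine ⟨r ⊓ 𝒰.inv s, Or.inr (Or.inr (Or.inr rfl)), hM',
            Or.inl (Or.inl ⟨?_, ?_⟩)⟩
          · exact profile_mem_of_le hP₁ hregP₁ hr1 hM' inf_le_left
          · have hmemS : 𝒰.inv r ⊔ s ∈ S := by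
              have h1 := hS _ hM'
              rwa [inv_inf, 𝒰.inv_inv] at h1
            rw [inv_inf, 𝒰.inv_inv]
            exact profile_sup_mem hQ₁ hr1' hsQ₁ hmemS
      · -- s* ∈ Q₁ : r ⊓ s distinguishes the first pair
        refine ⟨r ⊓ s, Or.inr (Or.inl rfl), hM, Or.inl (Or.inl ⟨?_, ?_⟩)⟩
        · exact profile_mem_of_le hP₁ hregP₁ hr1 hM inf_le_left
        · have hmemS : 𝒰.inv r ⊔ 𝒰.inv s ∈ S := by
            have h1 := hS _ hM
            rwa [inv_inf] at h1
          rw [inv_inf]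
          exact profile_sup_mem hQ₁ hr1' hsQ₁ hmemS
    · -- r* ∈ Q₂ : r ⊓ s distinguishes the second pair
      refine ⟨r ⊓ s, Or.inr (Or.inl rfl), hM, Or.inr (Or.inl ⟨?_, ?_⟩)⟩
      · exact profile_mem_of_le hP₂ hregP₂ hs2 hM inf_le_right
      · have hmemS : 𝒰.inv r ⊔ 𝒰.inv s ∈ S := by
          have h1 := hS _ hM
          rwa [inv_inf] at h1
        rw [inv_inf]
        exact profile_sup_mem hQ₂ hrQ₂ hs2' hmemS

lemma corner_wlog {𝒰 : SepUniverse U} {S P₁ Q₁ P₂ Q₂ : Set U}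
    (hS : SepSystem 𝒰 S) (hsub : StructSubmodular S)
    (hP₁ : IsProfile 𝒰 S P₁) (hregP₁ : Regular 𝒰 P₁)
    (hQ₁ : IsProfile 𝒰 S Q₁) (hregQ₁ : Regular 𝒰 Q₁)
    (hP₂ : IsProfile 𝒰 S P₂) (hregP₂ : Regular 𝒰 P₂)
    (hQ₂ : IsProfile 𝒰 S Q₂) (hregQ₂ : Regular 𝒰 Q₂)
    {r s : U} (hr : r ∈ S) (hs : s ∈ S)
    (hr1 : r ∈ P₁) (hr1' : 𝒰.inv r ∈ Q₁)
    (hs2 : s ∈ P₂) (hs2' : 𝒰.inv s ∈ Q₂) :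
    ∃ c, IsCorner 𝒰 r s c ∧ c ∈ S ∧
      (Distinguishes 𝒰 c P₁ Q₁ ∨ Distinguishes 𝒰 c P₂ Q₂) := by
  rcases profile_orient hP₁ hs with hs1 | hs1
  · exact corner_main hS hsub hP₁ hregP₁ hQ₁ hregQ₁ hP₂ hregP₂ hQ₂ hregQ₂
      hr hs hr1 hr1' hs2 hs2' hs1
  · obtain ⟨c, hic, hcS, hd⟩ :=
      corner_main hS hsub hP₁ hregP₁ hQ₁ hregQ₁ hQ₂ hregQ₂ hP₂ hregP₂
        hr (hS s hs) hr1 hr1' hs2' (by rw [𝒰.inv_inv]; exact hs2) hs1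
    exact ⟨c, isCorner_inv_right hic, hcS, hd.imp id dist_symm⟩

lemma corner_full {𝒰 : SepUniverse U} {S P₁ Q₁ P₂ Q₂ : Set U}
    (hS : SepSystem 𝒰 S) (hsub : StructSubmodular S)
    (hP₁ : IsProfile 𝒰 S P₁) (hregP₁ : Regular 𝒰 P₁)
    (hQ₁ : IsProfile 𝒰 S Q₁) (hregQ₁ : Regular 𝒰 Q₁)
    (hP₂ : IsProfile 𝒰 S P₂) (hregP₂ : Regular 𝒰 P₂)
    (hQ₂ : IsProfile 𝒰 S Q₂) (hregQ₂ : Regular 𝒰 Q₂)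
    {r s : U} (hr : r ∈ S) (hs : s ∈ S)
    (h1 : Distinguishes 𝒰 r P₁ Q₁) (h2 : Distinguishes 𝒰 s P₂ Q₂) :
    ∃ c, IsCorner 𝒰 r s c ∧ c ∈ S ∧
      (Distinguishes 𝒰 c P₁ Q₁ ∨ Distinguishes 𝒰 c P₂ Q₂) := by
  rcases h1 with ⟨ha, hb⟩ | ⟨ha, hb⟩ <;> rcases h2 with ⟨hc, hd⟩ | ⟨hc, hd⟩
  · exact corner_wlog hS hsub hP₁ hregP₁ hQ₁ hregQ₁ hP₂ hregP₂ hQ₂ hregQ₂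
      hr hs ha hb hc hd
  · obtain ⟨c, h3, h4, h5⟩ :=
      corner_wlog hS hsub hP₁ hregP₁ hQ₁ hregQ₁ hQ₂ hregQ₂ hP₂ hregP₂
        hr hs ha hb hd hc
    exact ⟨c, h3, h4, h5.imp id dist_symm⟩
  · obtain ⟨c, h3, h4, h5⟩ :=
      corner_wlog hS hsub hQ₁ hregQ₁ hP₁ hregP₁ hP₂ hregP₂ hQ₂ hregQ₂
        hr hs hb ha hc hd
    exact ⟨c, h3, h4, h5.imp dist_symm id⟩
  · obtain ⟨c, h3, h4, h5⟩ :=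
      corner_wlog hS hsub hQ₁ hregQ₁ hP₁ hregP₁ hQ₂ hregQ₂ hP₂ hregP₂
        hr hs hb ha hd hc
    exact ⟨c, h3, h4, h5.imp dist_symm dist_symm⟩

lemma splinter_lemma [Nonempty U] {ι : Type*} (𝒰 : SepUniverse U) :
    ∀ (n : ℕ) (A : ι → Set U) (I : Finset ι), I.card ≤ n →
      (∀ i ∈ I, (A i).Nonempty) →
      (∀ i ∈ I, ∀ j ∈ I, ∀ x ∈ A i, ∀ y ∈ A j, ¬ Nested 𝒰 x y →
        ∃ c, IsCorner 𝒰 x y c ∧ (c ∈ A i ∨ c ∈ A j)) →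
      ∃ N : Set U, (∀ x ∈ N, ∃ i ∈ I, x ∈ A i) ∧
        (∀ x ∈ N, ∀ y ∈ N, Nested 𝒰 x y) ∧
        ∀ i ∈ I, ∃ x ∈ A i, x ∈ N := by
  intro n
  induction n with
  | zero =>
    intro A I hcard _ _
    have hI : I = ∅ := Finset.card_eq_zero.mp (Nat.le_zero.mp hcard)
    subst hI
    exact ⟨∅, by simp, by simp, by simp⟩
  | succ n IH =>
    intro A I hcard hne hspl
    classical
    rcases I.eq_empty_or_nonempty with rfl | ⟨i₀, hi₀⟩
    · exact ⟨∅, by simp, by simp, by simp⟩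
    set I' := I.erase i₀ with hI'def
    have hI'card : I'.card ≤ n := by
      have h1 : I'.card = I.card - 1 := by
        rw [hI'def]
        exact Finset.card_erase_of_mem hi₀
      have hpos : 1 ≤ I.card := Finset.card_pos.mpr ⟨i₀, hi₀⟩
      omega
    have hI'sub : ∀ l ∈ I', l ∈ I := fun l hl => Finset.mem_of_mem_erase hl
    have inner : ∀ (κ : ℕ) (a : U), a ∈ A i₀ → ∀ g : ι → U,
        (∀ l ∈ I', g l ∈ A l) →
        (∀ l ∈ I', ∀ k ∈ I', Nested 𝒰 (g l) (g k)) →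
        (I'.filter (fun l => ¬ Nested 𝒰 (g l) a)).card ≤ κ →
        ∃ N : Set U, (∀ x ∈ N, ∃ i ∈ I, x ∈ A i) ∧
          (∀ x ∈ N, ∀ y ∈ N, Nested 𝒰 x y) ∧
          ∀ i ∈ I, ∃ x ∈ A i, x ∈ N := by
      intro κ
      induction κ with
      | zero =>
        intro a ha g hg hgn hb
        have hnested : ∀ l ∈ I', Nested 𝒰 (g l) a := by
          intro l hl
          by_contra hcon
          have hmem : l ∈ I'.filter (fun l => ¬ Nested 𝒰 (g l) a) :=
            Finset.mem_filter.mpr ⟨hl, hcon⟩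
          have := Finset.card_pos.mpr ⟨l, hmem⟩
          omega
        refine ⟨insert a (g '' (I' : Set ι)), ?_, ?_, ?_⟩
        · intro x hx
          rcases Set.mem_insert_iff.mp hx with rfl | ⟨l, hl, rfl⟩
          · exact ⟨i₀, hi₀, ha⟩
          · have hl' : l ∈ I' := hl
            exact ⟨l, hI'sub l hl', hg l hl'⟩
        · intro x hx y hy
          rcases Set.mem_insert_iff.mp hx with rfl | ⟨l, hl, rfl⟩ <;>
            rcases Set.mem_insert_iff.mp hy with rfl | ⟨k, hk, rfl⟩
          · exact nested_refl 𝒰 _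
          · exact nested_symm (hnested k hk)
          · exact hnested l hl
          · exact hgn l hl k hk
        · intro i hi
          by_cases h : i = i₀
          · subst h
            exact ⟨a, ha, Set.mem_insert _ _⟩
          · have hi' : i ∈ I' := Finset.mem_erase.mpr ⟨h, hi⟩
            exact ⟨g i, hg i hi', Set.mem_insert_iff.mpr (Or.inr ⟨i, hi', rfl⟩)⟩
      | succ κ ihκ =>
        intro a ha g hg hgn hb
        by_cases hsmall : (I'.filter (fun l => ¬ Nested 𝒰 (g l) a)).card ≤ κ
        · exact ihκ a ha g hg hgn hsmall
        by_cases hall : ∀ k ∈ I', ∃ x ∈ A k, Nested 𝒰 x a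
        · -- shrink to the elements nested with a and use the outer IH
          obtain ⟨N', hN1, hN2, hN3⟩ :=
            IH (fun l => {x | x ∈ A l ∧ Nested 𝒰 x a}) I' hI'card
              (by
                intro l hl
                obtain ⟨x, hx, hnx⟩ := hall l hl
                exact ⟨x, hx, hnx⟩)
              (by
                intro k hk l hl x hx y hy hxy
                obtain ⟨c, hic, hmem⟩ :=
                  hspl k (hI'sub k hk) l (hI'sub l hl) x hx.1 y hy.1 hxy
                have hca : Nested 𝒰 c a :=
                  nested_symm (fish hxy (nested_symm hx.2) (nested_symm hy.2) hic)
                exact ⟨c, hic, hmem.imp (fun h => ⟨h, hca⟩) (fun h => ⟨h, hca⟩)⟩)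
          refine ⟨insert a N', ?_, ?_, ?_⟩
          · intro x hx
            rcases Set.mem_insert_iff.mp hx with rfl | hx'
            · exact ⟨i₀, hi₀, ha⟩
            · obtain ⟨l, hl, hxl⟩ := hN1 x hx'
              exact ⟨l, hI'sub l hl, hxl.1⟩
          · intro x hx y hy
            rcases Set.mem_insert_iff.mp hx with rfl | hx' <;>
              rcases Set.mem_insert_iff.mp hy with rfl | hy'
            · exact nested_refl 𝒰 _
            · obtain ⟨l, hl, hyl⟩ := hN1 y hy'
              exact nested_symm hyl.2
            · obtain ⟨l, hl, hxl⟩ := hN1 x hx'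
              exact hxl.2
            · exact hN2 x hx' y hy'
          · intro i hi
            by_cases h : i = i₀
            · subst h
              exact ⟨a, ha, Set.mem_insert _ _⟩
            · have hi' : i ∈ I' := Finset.mem_erase.mpr ⟨h, hi⟩
              obtain ⟨x, hx, hxN⟩ := hN3 i hi'
              exact ⟨x, hx.1, Set.mem_insert_iff.mpr (Or.inr hxN)⟩
        · -- replace a by a corner and recurse
          push_neg at hall
          obtain ⟨k, hk, hknest⟩ := hall
          have hgk : ¬ Nested 𝒰 (g k) a := hknest _ (hg k hk)
          obtain ⟨c, hic, hmem⟩ :=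
            hspl k (hI'sub k hk) i₀ hi₀ (g k) (hg k hk) a ha hgk
          have hca : Nested 𝒰 c a := corner_nested_snd hic
          have hcA : c ∈ A i₀ := by
            rcases hmem with h | h
            · exact absurd hca (hknest c h)
            · exact h
          apply ihκ c hcA g hg hgn
          have hsubset : I'.filter (fun l => ¬ Nested 𝒰 (g l) c) ⊆
              (I'.filter (fun l => ¬ Nested 𝒰 (g l) a)).erase k := by
            intro l hl
            obtain ⟨hlI, hlc⟩ := Finset.mem_filter.mp hl
            refine Finset.mem_erase.mpr ⟨?_, Finset.mem_filter.mpr ⟨hlI, ?_⟩⟩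
            · rintro rfl
              exact hlc (nested_symm (corner_nested_fst hic))
            · intro hla
              exact hlc (fish hgk (hgn l hlI k hk) hla hic)
          have hkmem : k ∈ I'.filter (fun l => ¬ Nested 𝒰 (g l) a) :=
            Finset.mem_filter.mpr ⟨hk, hgk⟩
          have h1 := Finset.card_le_card hsubset
          have h2 := Finset.card_erase_of_mem hkmem
          have h3 := Finset.card_pos.mpr ⟨k, hkmem⟩
          omega
    obtain ⟨a, ha⟩ := hne i₀ hi₀
    obtain ⟨N₀, hN₀1, hN₀2, hN₀3⟩ :=
      IH A I' hI'card (fun l hl => hne l (hI'sub l hl))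
        (fun i hi j hj => hspl i (hI'sub i hi) j (hI'sub j hj))
    have hch : ∀ l, l ∈ I' → ∃ x, x ∈ A l ∧ x ∈ N₀ := by
      intro l hl
      obtain ⟨x, hx, hxN⟩ := hN₀3 l hl
      exact ⟨x, hx, hxN⟩
    choose g₀ hg₀1 hg₀2 using hch
    set g : ι → U := fun l => if hl : l ∈ I' then g₀ l hl else Classical.arbitrary U
      with hgdef
    have hg : ∀ l ∈ I', g l ∈ A l := by
      intro l hl
      simp only [hgdef, dif_pos hl]
      exact hg₀1 l hl
    have hgN : ∀ l ∈ I', g l ∈ N₀ := by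
      intro l hl
      simp only [hgdef, dif_pos hl]
      exact hg₀2 l hl
    exact inner I'.card a ha g hg
      (fun l hl k hk => hN₀2 _ (hgN l hl) _ (hgN k hk))
      (Finset.card_filter_le _ _)

end TreeOfTanglesAux

/-- In any universe of separations, for every structurally
submodular separation system `S` there is a nested set `N ⊆ S` distinguishing
any two distinct regular profiles of `S`. -/
theorem tree_of_tangles_regular (𝒰 : SepUniverse U) (S : Set U)
    (hS : SepSystem 𝒰 S) (hsub : StructSubmodular S) :
    ∃ N : Set U, N ⊆ S ∧ NestedSet 𝒰 N ∧
      ∀ P Q : Set U, IsProfile 𝒰 S P → Regular 𝒰 P →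
        IsProfile 𝒰 S Q → Regular 𝒰 Q → P ≠ Q →
        ∃ s ∈ N, Distinguishes 𝒰 s P Q := by
  classical
  rcases isEmpty_or_nonempty U with hU | hU
  · refine ⟨∅, by simp, ?_, ?_⟩
    · intro r hr
      exact absurd hr (Set.notMem_empty r)
    · intro P Q _ _ _ _ hne
      exfalso
      apply hne
      ext x
      exact (hU.false x).elim
  · haveI : Nonempty U := hU
    haveI : Finite (Set U) := (inferInstance : Finite (U → Prop))
    set A : Set U × Set U → Set U :=
      fun pq => {c | c ∈ S ∧ Distinguishes 𝒰 c pq.1 pq.2} with hAdef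
    set PP : Set (Set U × Set U) :=
      {pq | IsProfile 𝒰 S pq.1 ∧ Regular 𝒰 pq.1 ∧ IsProfile 𝒰 S pq.2 ∧
        Regular 𝒰 pq.2 ∧ pq.1 ≠ pq.2} with hPPdef
    have hfin : PP.Finite := Set.toFinite _
    have hAne : ∀ i ∈ hfin.toFinset, (A i).Nonempty := by
      intro pq hpq
      rw [Set.Finite.mem_toFinset] at hpq
      obtain ⟨hP, _, hQ, _, hne⟩ := hpq
      obtain ⟨x, hxS, hd⟩ := exists_distinguisher hP hQ hne
      exact ⟨x, hxS, hd⟩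
    have hAspl : ∀ i ∈ hfin.toFinset, ∀ j ∈ hfin.toFinset,
        ∀ x ∈ A i, ∀ y ∈ A j, ¬ Nested 𝒰 x y →
        ∃ c, IsCorner 𝒰 x y c ∧ (c ∈ A i ∨ c ∈ A j) := by
      intro i hi j hj x hx y hy _
      rw [Set.Finite.mem_toFinset] at hi hj
      obtain ⟨hP₁, hregP₁, hQ₁, hregQ₁, -⟩ := hi
      obtain ⟨hP₂, hregP₂, hQ₂, hregQ₂, -⟩ := hj
      obtain ⟨c, hic, hcS, hd⟩ :=
        corner_full hS hsub hP₁ hregP₁ hQ₁ hregQ₁ hP₂ hregP₂ hQ₂ hregQ₂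
          hx.1 hy.1 hx.2 hy.2
      exact ⟨c, hic, hd.imp (fun h => ⟨hcS, h⟩) (fun h => ⟨hcS, h⟩)⟩
    obtain ⟨N, hN1, hN2, hN3⟩ :=
      splinter_lemma 𝒰 hfin.toFinset.card A hfin.toFinset le_rfl hAne hAspl
    refine ⟨N, ?_, ?_, ?_⟩
    · intro x hx
      obtain ⟨i, _, hxi⟩ := hN1 x hx
      exact hxi.1
    · exact hN2
    · intro P Q hP hPreg hQ hQreg hne
      have hmem : (P, Q) ∈ hfin.toFinset := by
        rw [Set.Finite.mem_toFinset]
        exact ⟨hP, hPreg, hQ, hQreg, hne⟩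
      obtain ⟨x, hxA, hxN⟩ := hN3 (P, Q) hmem
      exact ⟨x, hxN, hxA.2⟩


end SepDemo
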